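/- The group with presentation ⟨A, B | A^{2k+1} = B^{2k+1} = (AB)^{2k+1} = 1, (A^{-1}B^k)^2 = 1, (B^k A^{k-1})^3 = 1⟩ is isomorphic to the triangle group Δ(2,3,2k+1) = ⟨α, u, v | α^{2k+1} = u^3 = v^2 = αuv = 1⟩, via A ↦ α², B ↦ vα²v, with inverse sending α ↦ A^{k+1}, u ↦ A^{-1}B^k A^k, v ↦ A^k B^k A^k. -/

import Mathlib

/-- Relations of the `(2,3,n)` von Dyck triangle group
`⟨α, u, v | αⁿ = u³ = v² = αuv = 1⟩` on generators `α = 0`, `u = 1`, `v = 2`. -/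
def triangle23Rels (n : ℕ) : Set (FreeGroup (Fin 3)) :=
  {FreeGroup.of 0 ^ n, FreeGroup.of 1 ^ 3, FreeGroup.of 2 ^ 2,
    FreeGroup.of 0 * FreeGroup.of 1 * FreeGroup.of 2}

/-- Relations of the group
`⟨A, B | A^{2k+1} = B^{2k+1} = (AB)^{2k+1} = (A⁻¹Bᵏ)² = (BᵏA^{k-1})³ = 1⟩`
on generators `A = 0`, `B = 1`. -/
def imageRels (k : ℕ) : Set (FreeGroup (Fin 2)) :=
  {FreeGroup.of 0 ^ (2 * k + 1), FreeGroup.of 1 ^ (2 * k + 1),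
    (FreeGroup.of 0 * FreeGroup.of 1) ^ (2 * k + 1),
    ((FreeGroup.of 0)⁻¹ * FreeGroup.of 1 ^ k) ^ 2,
    (FreeGroup.of 1 ^ k * FreeGroup.of 0 ^ (k - 1)) ^ 3}

private lemma mk_rel_eq_one {β : Type*} {rels : Set (FreeGroup β)} {r : FreeGroup β}
    (h : r ∈ rels) : PresentedGroup.mk rels r = 1 :=
  (QuotientGroup.eq_one_iff r).mpr (Subgroup.subset_normalClosure h)

private lemma core_lemma {G : Type*} [Group G] (β t : G)
    (e1 : β * t * β = t * t) (e2 : t * (t * t) = 1) :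
    β⁻¹ * ((β * β) * (t * β) * ((β * β) * (t * β))) * β⁻¹
      = (t * β) * (β * β)⁻¹ * ((t * β) * (β * β)⁻¹) := by
  have r3 : ∀ x : G, β * (t * x) = t * (t * (β⁻¹ * x)) := fun x => by
    rw [show β * (t * x) = (β * t * β) * (β⁻¹ * x) by group, e1]; group
  have r3' : β * t = t * (t * β⁻¹) := by
    rw [show β * t = (β * t * β) * β⁻¹ by group, e1]; group
  have r2 : ∀ x : G, t * (t * (t * x)) = x := fun x => by
    rw [show t * (t * (t * x)) = (t * (t * t)) * x by group, e2, one_mul]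
  have main : β * (t * (β * (β * (β * t)))) = t * (β⁻¹ * (t * β⁻¹)) := by
    calc β * (t * (β * (β * (β * t))))
        = t * (t * (β⁻¹ * (β * (β * (β * t))))) := r3 _
      _ = t * (t * (β * (β * t))) := by rw [inv_mul_cancel_left]
      _ = t * (t * (β * (t * (t * β⁻¹)))) := by rw [r3']
      _ = t * (t * (t * (t * (β⁻¹ * (t * β⁻¹))))) := by rw [r3 (t * β⁻¹)]
      _ = t * (β⁻¹ * (t * β⁻¹)) := r2 _
  calc β⁻¹ * ((β * β) * (t * β) * ((β * β) * (t * β))) * β⁻¹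
      = β * (t * (β * (β * (β * t)))) := by group
    _ = t * (β⁻¹ * (t * β⁻¹)) := main
    _ = (t * β) * (β * β)⁻¹ * ((t * β) * (β * β)⁻¹) := by group

private lemma key_lemma {G : Type*} [Group G] (k : ℕ) (hk : 1 ≤ k) (a b : G)
    (ha : a ^ (2 * k + 1) = 1) (hb : b ^ (2 * k + 1) = 1)
    (h4 : (a⁻¹ * b ^ k) ^ 2 = 1) (h5 : (b ^ k * a ^ (k - 1)) ^ 3 = 1) :
    a ^ k * b ^ (2 * k) * a ^ k = b := by
  have hkk : k - 1 + 1 = k := Nat.succ_pred_eq_of_pos hk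
  set s : G := a⁻¹ * b ^ k with hs_def
  set β : G := a ^ (k + 1) with hβ_def
  set t : G := s * a ^ k with ht_def
  have hak : a ^ k = β⁻¹ := eq_inv_of_mul_eq_one_left
    (by rw [hβ_def, ← pow_add, show k + (k + 1) = 2 * k + 1 by omega]; exact ha)
  have haβ : a = β * β := by
    rw [hβ_def, ← pow_add, show k + 1 + (k + 1) = (2 * k + 1) + 1 by omega, pow_succ, ha, one_mul]
  have hs2 : s * s = 1 := by rw [← pow_two]; exact h4
  have ht3 : t * (t * t) = 1 := by
    have h1 : t = a⁻¹ * (b ^ k * a ^ (k - 1)) * a := by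
      rw [ht_def, hs_def]
      calc a⁻¹ * b ^ k * a ^ k = a⁻¹ * b ^ k * (a ^ (k - 1) * a) := by rw [← pow_succ, hkk]
        _ = a⁻¹ * (b ^ k * a ^ (k - 1)) * a := by group
    have h2 := conj_pow (i := 3) (a := a⁻¹) (b := b ^ k * a ^ (k - 1))
    rw [inv_inv] at h2
    have h3 : t ^ 3 = 1 := by rw [h1, h2, h5, mul_one, inv_mul_cancel]
    rw [← mul_assoc, ← pow_two, ← pow_succ]; exact h3
  have hbk : b ^ k = a * s := (mul_inv_cancel_left a (b ^ k)).symm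
  have hstβ : s = t * β := by
    rw [ht_def, hβ_def, mul_assoc, ← pow_add, show k + (k + 1) = 2 * k + 1 by omega, ha, mul_one]
  have hsi : s⁻¹ = s := inv_eq_of_mul_eq_one_right hs2
  have hb2k : b ^ (2 * k) = b⁻¹ := eq_inv_of_mul_eq_one_left (by rw [← pow_succ]; exact hb)
  have hbeq : b = s * a⁻¹ * (s * a⁻¹) := by
    have h1 : b = (b ^ k * b ^ k)⁻¹ := by
      rw [← pow_add, show k + k = 2 * k by omega, hb2k, inv_inv]
    rw [h1, hbk, mul_inv_rev, mul_inv_rev, hsi]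
  have e1 : β * t * β = t * t := by
    have h1 : t * (β * (t * β)) = 1 := by
      rw [show t * (β * (t * β)) = (t * β) * (t * β) by group, ← hstβ]; exact hs2
    rw [mul_assoc, ← inv_eq_of_mul_eq_one_right h1, inv_eq_of_mul_eq_one_right ht3]
  have main := core_lemma β t e1 ht3
  calc a ^ k * b ^ (2 * k) * a ^ k
      = a ^ k * (b ^ k * b ^ k) * a ^ k := by rw [← pow_add, show k + k = 2 * k by omega]
    _ = β⁻¹ * ((β * β) * (t * β) * ((β * β) * (t * β))) * β⁻¹ := by
        rw [hbk, hstβ, hak, haβ]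
    _ = (t * β) * (β * β)⁻¹ * ((t * β) * (β * β)⁻¹) := main
    _ = b := by rw [← hstβ, ← haβ, ← hbeq]

private lemma wordG {H : Type*} [Group H] (k : ℕ) (hk : 1 ≤ k) (a b : H)
    (ha : a ^ (2 * k + 1) = 1) (hb : b ^ (2 * k + 1) = 1)
    (h4 : (a⁻¹ * b ^ k) ^ 2 = 1) (h5 : (b ^ k * a ^ (k - 1)) ^ 3 = 1) :
    ((a ^ (k + 1)) ^ (2 * k + 1) = 1 ∧ (a⁻¹ * b ^ k * a ^ k) ^ 3 = 1 ∧
      (a ^ k * b ^ k * a ^ k) ^ 2 = 1 ∧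
      a ^ (k + 1) * (a⁻¹ * b ^ k * a ^ k) * (a ^ k * b ^ k * a ^ k) = 1) ∧
    (a ^ (k + 1)) ^ 2 = a ∧
    (a ^ k * b ^ k * a ^ k) * (a ^ (k + 1)) ^ 2 * (a ^ k * b ^ k * a ^ k) = b := by
  have hkk : k - 1 + 1 = k := Nat.succ_pred_eq_of_pos hk
  have h4' : b ^ k * (a⁻¹ * b ^ k) = a := by
    have h1 : a⁻¹ * (b ^ k * (a⁻¹ * b ^ k)) = 1 := by
      rw [show a⁻¹ * (b ^ k * (a⁻¹ * b ^ k)) = (a⁻¹ * b ^ k) ^ 2 by rw [pow_two]; group]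
      exact h4
    exact ((inv_eq_of_mul_eq_one_right h1).symm).trans (inv_inv a)
  have haa : a ^ k * a ^ k = a⁻¹ := by
    rw [← pow_add]
    exact eq_inv_of_mul_eq_one_left (by rw [← pow_succ, show k + k + 1 = 2 * k + 1 by omega]; exact ha)
  have core3 : a ^ k * (b ^ k * (a⁻¹ * (b ^ k * a ^ k))) = 1 := by
    rw [show a ^ k * (b ^ k * (a⁻¹ * (b ^ k * a ^ k))) = a ^ k * (b ^ k * (a⁻¹ * b ^ k)) * a ^ k
      by group, h4', ← pow_succ, ← pow_add, show k + 1 + k = 2 * k + 1 by omega]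
    exact ha
  have S1 : (a ^ (k + 1)) ^ (2 * k + 1) = 1 := by
    rw [← pow_mul, show (k + 1) * (2 * k + 1) = (2 * k + 1) * (k + 1) by ring, pow_mul, ha, one_pow]
  have S2 : (a⁻¹ * b ^ k * a ^ k) ^ 3 = 1 := by
    have h1 : a⁻¹ * b ^ k * a ^ k = a⁻¹ * (b ^ k * a ^ (k - 1)) * a := by
      calc a⁻¹ * b ^ k * a ^ k = a⁻¹ * b ^ k * (a ^ (k - 1) * a) := by rw [← pow_succ, hkk]
        _ = a⁻¹ * (b ^ k * a ^ (k - 1)) * a := by group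
    have h2 := conj_pow (i := 3) (a := a⁻¹) (b := b ^ k * a ^ (k - 1))
    rw [inv_inv] at h2
    rw [h1, h2, h5, mul_one, inv_mul_cancel]
  have S3 : (a ^ k * b ^ k * a ^ k) ^ 2 = 1 := by
    rw [show (a ^ k * b ^ k * a ^ k) ^ 2 = a ^ k * (b ^ k * ((a ^ k * a ^ k) * (b ^ k * a ^ k)))
      by rw [pow_two]; group, haa]
    exact core3
  have S4 : a ^ (k + 1) * (a⁻¹ * b ^ k * a ^ k) * (a ^ k * b ^ k * a ^ k) = 1 := by
    rw [show a ^ (k + 1) * (a⁻¹ * b ^ k * a ^ k) * (a ^ k * b ^ k * a ^ k)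
        = a ^ (k + 1) * a⁻¹ * (b ^ k * ((a ^ k * a ^ k) * (b ^ k * a ^ k))) by group,
      pow_succ, mul_inv_cancel_right, haa]
    exact core3
  have c1 : (a ^ (k + 1)) ^ 2 = a := by
    rw [← pow_mul, show (k + 1) * 2 = (2 * k + 1) + 1 by ring, pow_succ, ha, one_mul]
  have c2 : (a ^ k * b ^ k * a ^ k) * (a ^ (k + 1)) ^ 2 * (a ^ k * b ^ k * a ^ k) = b := by
    rw [c1, show a ^ k * b ^ k * a ^ k * a * (a ^ k * b ^ k * a ^ k)
      = a ^ k * b ^ k * (a ^ k * (a * a ^ k)) * (b ^ k * a ^ k) by group]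
    have h0 : a ^ k * (a * a ^ k) = 1 := by
      rw [← pow_succ', ← pow_add, show k + (k + 1) = 2 * k + 1 by omega]; exact ha
    rw [h0, mul_one, show a ^ k * b ^ k * (b ^ k * a ^ k) = a ^ k * (b ^ k * b ^ k) * a ^ k
      by group, ← pow_add, show k + k = 2 * k by omega]
    exact key_lemma k hk a b ha hb h4 h5
  exact ⟨⟨S1, S2, S3, S4⟩, c1, c2⟩

private lemma wordT {H : Type*} [Group H] (k : ℕ) (hk : 1 ≤ k) (α u v : H)
    (hα : α ^ (2 * k + 1) = 1) (hu : u ^ 3 = 1) (hv : v ^ 2 = 1) (huv : α * u * v = 1) :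
    ((α ^ 2) ^ (2 * k + 1) = 1 ∧ (v * α ^ 2 * v) ^ (2 * k + 1) = 1 ∧
      (α ^ 2 * (v * α ^ 2 * v)) ^ (2 * k + 1) = 1 ∧
      ((α ^ 2)⁻¹ * (v * α ^ 2 * v) ^ k) ^ 2 = 1 ∧
      ((v * α ^ 2 * v) ^ k * (α ^ 2) ^ (k - 1)) ^ 3 = 1) ∧
    (α ^ 2) ^ (k + 1) = α ∧
    (α ^ 2)⁻¹ * (v * α ^ 2 * v) ^ k * (α ^ 2) ^ k = u ∧
    (α ^ 2) ^ k * (v * α ^ 2 * v) ^ k * (α ^ 2) ^ k = v := by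
  have hvv : v * v = 1 := by rw [← pow_two]; exact hv
  have hvi : v⁻¹ = v := inv_eq_of_mul_eq_one_right hvv
  have huu : u * (u * u) = 1 := by rw [← mul_assoc, ← pow_two, ← pow_succ]; exact hu
  have huu' : u * u * u = 1 := by rw [mul_assoc]; exact huu
  have hui : u⁻¹ = u * u := inv_eq_of_mul_eq_one_right huu
  have hαi : α⁻¹ = u * v := inv_eq_of_mul_eq_one_right (by rw [← mul_assoc]; exact huv)
  have hαe : α = v * (u * u) := by
    have h1 : α⁻¹⁻¹ = (u * v)⁻¹ := by rw [hαi]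
    rw [inv_inv] at h1
    rw [h1, mul_inv_rev, hvi, hui]
  have rv : ∀ x : H, v * (v * x) = x := fun x => by rw [← mul_assoc, hvv, one_mul]
  have ru : ∀ x : H, u * (u * (u * x)) = x := fun x => by
    rw [← mul_assoc, ← mul_assoc, huu', one_mul]
  have hconj : ∀ (x : H) (m : ℕ), (v * x * v) ^ m = v * x ^ m * v := fun x m => by
    have h := conj_pow (i := m) (a := v) (b := x)
    rw [hvi] at h
    exact h
  have hα2k : α ^ (2 * k) = α⁻¹ := eq_inv_of_mul_eq_one_left (by rw [← pow_succ]; exact hα)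
  have R1 : (α ^ 2) ^ (2 * k + 1) = 1 := by
    rw [← pow_mul, show 2 * (2 * k + 1) = (2 * k + 1) * 2 by ring, pow_mul, hα, one_pow]
  have R2 : (v * α ^ 2 * v) ^ (2 * k + 1) = 1 := by rw [hconj, R1, mul_one, hvv]
  have R2k : (v * α ^ 2 * v) ^ k = v * α⁻¹ * v := by rw [hconj, ← pow_mul, hα2k]
  have hc : (v * α * v) ^ (2 * k + 1) = 1 := by rw [hconj, hα, mul_one, hvv]
  have R4 : ((α ^ 2)⁻¹ * (v * α ^ 2 * v) ^ k) ^ 2 = 1 := by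
    rw [R2k, pow_two, show (α : H) ^ 2 = α * α from pow_two α]
    simp only [hαi, hαe, hvi, hui, mul_inv_rev, inv_inv, one_mul, mul_one, mul_assoc,
      ru, rv, huu, hvv]
  have R5 : ((v * α ^ 2 * v) ^ k * (α ^ 2) ^ (k - 1)) ^ 3 = 1 := by
    have h5e : (α ^ 2) ^ (k - 1) = (α ^ 3)⁻¹ := by
      rw [← pow_mul]
      exact eq_inv_of_mul_eq_one_left
        (by rw [← pow_add, show 2 * (k - 1) + 3 = 2 * k + 1 by omega]; exact hα)
    rw [R2k, h5e, show (v * α⁻¹ * v * (α ^ 3)⁻¹) ^ 3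
      = v * α⁻¹ * v * (α ^ 3)⁻¹ * (v * α⁻¹ * v * (α ^ 3)⁻¹) * (v * α⁻¹ * v * (α ^ 3)⁻¹)
      from by rw [pow_succ, pow_two],
      show (α : H) ^ 3 = α * α * α from by rw [pow_succ, pow_two]]
    simp only [hαi, hαe, hvi, hui, mul_inv_rev, inv_inv, one_mul, mul_one, mul_assoc,
      ru, rv, huu, hvv]
  have R3 : (α ^ 2 * (v * α ^ 2 * v)) ^ (2 * k + 1) = 1 := by
    have hkey : α ^ 2 * (v * α ^ 2 * v) = α * ((v * α * v) * (v * α * v))⁻¹ * α⁻¹ := by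
      rw [show (α : H) ^ 2 = α * α from pow_two α]
      simp only [hαi, hαe, hvi, hui, mul_inv_rev, inv_inv, one_mul, mul_one, mul_assoc,
        ru, rv, huu, hvv]
    have h := conj_pow (i := 2 * k + 1) (a := α) (b := ((v * α * v) * (v * α * v))⁻¹)
    rw [hkey, h, show ((v * α * v) * (v * α * v)) = (v * α * v) ^ 2 from (pow_two _).symm,
      inv_pow, ← pow_mul, show 2 * (2 * k + 1) = (2 * k + 1) * 2 by ring, pow_mul, hc,
      one_pow, inv_one, mul_one, mul_inv_cancel]
  have d1 : (α ^ 2) ^ (k + 1) = α := by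
    rw [← pow_mul, show 2 * (k + 1) = (2 * k + 1) + 1 by ring, pow_succ, hα, one_mul]
  have d2 : (α ^ 2)⁻¹ * (v * α ^ 2 * v) ^ k * (α ^ 2) ^ k = u := by
    rw [R2k, ← pow_mul, hα2k, show (α : H) ^ 2 = α * α from pow_two α]
    simp only [hαi, hαe, hvi, hui, mul_inv_rev, inv_inv, one_mul, mul_one, mul_assoc,
      ru, rv, huu, hvv]
  have d3 : (α ^ 2) ^ k * (v * α ^ 2 * v) ^ k * (α ^ 2) ^ k = v := by
    rw [R2k, ← pow_mul, hα2k]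
    simp only [hαi, hαe, hvi, hui, mul_inv_rev, inv_inv, one_mul, mul_one, mul_assoc,
      ru, rv, huu, hvv]
  exact ⟨⟨R1, R2, R3, R4, R5⟩, d1, d2, d3⟩

/-- The group `⟨A,B | A^{2k+1} = B^{2k+1} = (AB)^{2k+1} = (A⁻¹Bᵏ)² = (BᵏA^{k-1})³ = 1⟩`
is isomorphic to the triangle group `Δ(2,3,2k+1)` via `A ↦ α²`, `B ↦ vα²v`, the inverse
sending `α ↦ A^{k+1}`, `u ↦ A⁻¹BᵏAᵏ`, `v ↦ AᵏBᵏAᵏ`. -/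
theorem image_group_iso_triangle23 (k : ℕ) (hk : 1 ≤ k) :
    ∃ φ : PresentedGroup (imageRels k) ≃* PresentedGroup (triangle23Rels (2 * k + 1)),
      φ (PresentedGroup.of 0) = (PresentedGroup.of 0) ^ 2 ∧
      φ (PresentedGroup.of 1) =
        PresentedGroup.of 2 * (PresentedGroup.of 0) ^ 2 * PresentedGroup.of 2 ∧
      φ.symm (PresentedGroup.of 0) = (PresentedGroup.of 0) ^ (k + 1) ∧
      φ.symm (PresentedGroup.of 1) =
        (PresentedGroup.of 0)⁻¹ * (PresentedGroup.of 1) ^ k * (PresentedGroup.of 0) ^ k ∧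
      φ.symm (PresentedGroup.of 2) =
        (PresentedGroup.of 0) ^ k * (PresentedGroup.of 1) ^ k * (PresentedGroup.of 0) ^ k := by
  -- relations hold in the presented group on the image side
  have haG : (PresentedGroup.of 0 : PresentedGroup (imageRels k)) ^ (2 * k + 1) = 1 := by
    have h := mk_rel_eq_one (rels := imageRels k) (r := FreeGroup.of 0 ^ (2 * k + 1))
      (by simp [imageRels])
    rw [map_pow] at h; exact h
  have hbG : (PresentedGroup.of 1 : PresentedGroup (imageRels k)) ^ (2 * k + 1) = 1 := by
    have h := mk_rel_eq_one (rels := imageRels k) (r := FreeGroup.of 1 ^ (2 * k + 1))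
      (by simp [imageRels])
    rw [map_pow] at h; exact h
  have h4G : (((PresentedGroup.of 0 : PresentedGroup (imageRels k)))⁻¹ *
      (PresentedGroup.of 1 : PresentedGroup (imageRels k)) ^ k) ^ 2 = 1 := by
    have h := mk_rel_eq_one (rels := imageRels k)
      (r := ((FreeGroup.of 0)⁻¹ * FreeGroup.of 1 ^ k) ^ 2) (by simp [imageRels])
    rw [map_pow, map_mul, map_inv, map_pow] at h; exact h
  have h5G : ((PresentedGroup.of 1 : PresentedGroup (imageRels k)) ^ k *
      (PresentedGroup.of 0 : PresentedGroup (imageRels k)) ^ (k - 1)) ^ 3 = 1 := by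
    have h := mk_rel_eq_one (rels := imageRels k)
      (r := (FreeGroup.of 1 ^ k * FreeGroup.of 0 ^ (k - 1)) ^ 3) (by simp [imageRels])
    rw [map_pow, map_mul, map_pow, map_pow] at h; exact h
  -- relations hold in the triangle group
  have hαT : (PresentedGroup.of 0 : PresentedGroup (triangle23Rels (2 * k + 1))) ^ (2 * k + 1)
      = 1 := by
    have h := mk_rel_eq_one (rels := triangle23Rels (2 * k + 1))
      (r := FreeGroup.of 0 ^ (2 * k + 1)) (by simp [triangle23Rels])
    rw [map_pow] at h; exact h
  have huT : (PresentedGroup.of 1 : PresentedGroup (triangle23Rels (2 * k + 1))) ^ 3 = 1 := by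
    have h := mk_rel_eq_one (rels := triangle23Rels (2 * k + 1))
      (r := FreeGroup.of 1 ^ 3) (by simp [triangle23Rels])
    rw [map_pow] at h; exact h
  have hvT : (PresentedGroup.of 2 : PresentedGroup (triangle23Rels (2 * k + 1))) ^ 2 = 1 := by
    have h := mk_rel_eq_one (rels := triangle23Rels (2 * k + 1))
      (r := FreeGroup.of 2 ^ 2) (by simp [triangle23Rels])
    rw [map_pow] at h; exact h
  have huvT : (PresentedGroup.of 0 : PresentedGroup (triangle23Rels (2 * k + 1))) *
      PresentedGroup.of 1 * PresentedGroup.of 2 = 1 := by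
    have h := mk_rel_eq_one (rels := triangle23Rels (2 * k + 1))
      (r := FreeGroup.of 0 * FreeGroup.of 1 * FreeGroup.of 2) (by simp [triangle23Rels])
    rw [map_mul, map_mul] at h; exact h
  obtain ⟨⟨S1, S2, S3, S4⟩, c1, c2⟩ := wordG k hk _ _ haG hbG h4G h5G
  obtain ⟨⟨R1, R2, R3, R4, R5⟩, d1, d2, d3⟩ := wordT k hk _ _ _ hαT huT hvT huvT
  have hφrels : ∀ r ∈ imageRels k,
      FreeGroup.lift
        (![(PresentedGroup.of 0 : PresentedGroup (triangle23Rels (2 * k + 1))) ^ 2,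
          PresentedGroup.of 2 * (PresentedGroup.of 0) ^ 2 * PresentedGroup.of 2]) r = 1 := by
    intro r hr
    simp only [imageRels, Set.mem_insert_iff, Set.mem_singleton_iff] at hr
    rcases hr with rfl | rfl | rfl | rfl | rfl <;>
      simp only [map_pow, map_mul, map_inv, FreeGroup.lift_apply_of, Matrix.cons_val_zero,
        Matrix.cons_val_one, Matrix.head_cons]
    exacts [R1, R2, R3, R4, R5]
  have hψrels : ∀ r ∈ triangle23Rels (2 * k + 1),
      FreeGroup.lift
        (![(PresentedGroup.of 0 : PresentedGroup (imageRels k)) ^ (k + 1),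
          (PresentedGroup.of 0)⁻¹ * (PresentedGroup.of 1) ^ k * (PresentedGroup.of 0) ^ k,
          (PresentedGroup.of 0) ^ k * (PresentedGroup.of 1) ^ k * (PresentedGroup.of 0) ^ k])
        r = 1 := by
    intro r hr
    simp only [triangle23Rels, Set.mem_insert_iff, Set.mem_singleton_iff] at hr
    rcases hr with rfl | rfl | rfl | rfl <;>
      simp only [map_pow, map_mul, map_inv, FreeGroup.lift_apply_of, Matrix.cons_val_zero,
        Matrix.cons_val_one, Matrix.head_cons, Matrix.cons_val_two, Matrix.tail_cons]
    exacts [S1, S2, S3, S4]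
  refine ⟨MonoidHom.toMulEquiv (PresentedGroup.toGroup hφrels) (PresentedGroup.toGroup hψrels)
    ?_ ?_, ?_, ?_, ?_, ?_, ?_⟩
  · apply PresentedGroup.ext
    intro i
    fin_cases i
    · show (PresentedGroup.toGroup hψrels) ((PresentedGroup.toGroup hφrels)
        (PresentedGroup.of 0)) = PresentedGroup.of 0
      simp only [PresentedGroup.toGroup.of, Matrix.cons_val_zero, map_pow,
        Matrix.cons_val_one, Matrix.head_cons]
      exact c1
    · show (PresentedGroup.toGroup hψrels) ((PresentedGroup.toGroup hφrels)
        (PresentedGroup.of 1)) = PresentedGroup.of 1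
      simp only [PresentedGroup.toGroup.of, Matrix.cons_val_zero, map_pow, map_mul,
        Matrix.cons_val_one, Matrix.head_cons, Matrix.cons_val_two, Matrix.tail_cons]
      exact c2
  · apply PresentedGroup.ext
    intro i
    fin_cases i
    · show (PresentedGroup.toGroup hφrels) ((PresentedGroup.toGroup hψrels)
        (PresentedGroup.of 0)) = PresentedGroup.of 0
      simp only [PresentedGroup.toGroup.of, Matrix.cons_val_zero, map_pow,
        Matrix.cons_val_one, Matrix.head_cons]
      exact d1
    · show (PresentedGroup.toGroup hφrels) ((PresentedGroup.toGroup hψrels)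
        (PresentedGroup.of 1)) = PresentedGroup.of 1
      simp only [PresentedGroup.toGroup.of, Matrix.cons_val_zero, map_pow, map_mul, map_inv,
        Matrix.cons_val_one, Matrix.head_cons]
      exact d2
    · show (PresentedGroup.toGroup hφrels) ((PresentedGroup.toGroup hψrels)
        (PresentedGroup.of 2)) = PresentedGroup.of 2
      simp only [PresentedGroup.toGroup.of, Matrix.cons_val_zero, map_pow, map_mul,
        Matrix.cons_val_one, Matrix.head_cons, Matrix.cons_val_two, Matrix.tail_cons]
      exact d3
  · simp only [MonoidHom.toMulEquiv_apply, PresentedGroup.toGroup.of, Matrix.cons_val_zero]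
  · simp only [MonoidHom.toMulEquiv_apply, PresentedGroup.toGroup.of, Matrix.cons_val_one,
      Matrix.head_cons, Matrix.cons_val_zero]
  · simp only [MonoidHom.toMulEquiv_symm_apply, PresentedGroup.toGroup.of, Matrix.cons_val_zero]
  · simp only [MonoidHom.toMulEquiv_symm_apply, PresentedGroup.toGroup.of, Matrix.cons_val_one,
      Matrix.head_cons, Matrix.cons_val_zero]
  · simp only [MonoidHom.toMulEquiv_symm_apply, PresentedGroup.toGroup.of, Matrix.cons_val_two,
      Matrix.tail_cons, Matrix.head_cons]
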